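/- Suppose q_m = 1 (and hence q_i = 0 for all i < m), the case of pure leapfrogging without imitation. Then the uniform vector f with f^i = 1/m for all 1 ≤ i ≤ m is a stationary distribution, and every stationary distribution of the exogenous innovation–imitation model equals this uniform vector. -/

import Mathlib

/-- The transition matrix of the exogenous innovation–imitation model
(0-indexed: level `i : Fin m` corresponds to productivity level `i+1`). -/
def transMatrix (m : ℕ) (a : ℝ) (q : Fin m → ℝ) : Matrix (Fin m) (Fin m) ℝ :=
  fun i j =>
    (if (j : ℕ) = 0 then q i * (1 - a) else 0) +
    (if i = j then a else 0) +
    (if (j : ℕ) = (i : ℕ) + 1 then 1 - a else 0)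

/-- A stationary distribution of the exogenous innovation–imitation model. -/
def IsStationaryInnovImit (m : ℕ) (a : ℝ) (q : Fin m → ℝ) (f : Fin m → ℝ) : Prop :=
  (∀ i, 0 ≤ f i) ∧ (∑ i, f i = 1) ∧ (transMatrix m a q).mulVec f = f

lemma key (m : ℕ) (hm : 1 ≤ m) (a : ℝ) (q : Fin m → ℝ) (f : Fin m → ℝ) (i : Fin m) :
    (transMatrix m a q).mulVec f i =
      q i * (1 - a) * f ⟨0, hm⟩ + a * f i +
      (if h : (i : ℕ) + 1 < m then (1 - a) * f ⟨(i : ℕ) + 1, h⟩ else 0) := by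
  simp only [transMatrix, Matrix.mulVec, dotProduct, add_mul, Finset.sum_add_distrib]
  congr 1
  · congr 1
    · have h0 : ∀ j : Fin m, ((j : ℕ) = 0) = (j = ⟨0, hm⟩) := fun j => by
        simp [Fin.ext_iff]
      simp only [h0, ite_mul, zero_mul]
      simp [Finset.sum_ite_eq']
    · simp only [ite_mul, zero_mul]
      simp [Finset.sum_ite_eq]
  · by_cases h : (i : ℕ) + 1 < m
    · have h1 : ∀ j : Fin m, ((j : ℕ) = (i : ℕ) + 1) = (j = ⟨(i : ℕ) + 1, h⟩) := fun j => by
        simp [Fin.ext_iff]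
      simp only [h1, ite_mul, zero_mul]
      simp [Finset.sum_ite_eq', h]
    · rw [dif_neg h]
      apply Finset.sum_eq_zero
      intro j _
      have : (j : ℕ) ≠ (i : ℕ) + 1 := by omega
      simp [this]

/-- Pure leapfrogging (`q_m = 1`): the uniform distribution is stationary,
and it is the unique stationary distribution. -/
theorem stmt3 (m : ℕ) (hm : 1 ≤ m) (a : ℝ) (ha : a ∈ Set.Ioo (0 : ℝ) 1)
    (q : Fin m → ℝ) (hq : ∀ i, q i ∈ Set.Icc (0 : ℝ) 1) (hqsum : ∑ i, q i = 1)
    (hqm : q ⟨m - 1, by omega⟩ = 1) :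
    IsStationaryInnovImit m a q (fun _ => 1 / (m : ℝ)) ∧
      ∀ f : Fin m → ℝ, IsStationaryInnovImit m a q f → f = fun _ => 1 / (m : ℝ) := by
  obtain ⟨ha0, ha1⟩ := ha
  have hmR : (0 : ℝ) < (m : ℝ) := by exact_mod_cast hm
  set L : Fin m := ⟨m - 1, by omega⟩ with hL
  have hq0 : ∀ i : Fin m, i ≠ L → q i = 0 := by
    intro i hi
    have h2 : q L + ∑ j ∈ Finset.univ.erase L, q j = ∑ j, q j :=
      Finset.add_sum_erase Finset.univ q (Finset.mem_univ L)
    have h1 : ∑ j ∈ Finset.univ.erase L, q j = 0 := by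
      rw [hqsum] at h2
      have : q L = 1 := hqm
      linarith
    exact (Finset.sum_eq_zero_iff_of_nonneg (fun j _ => (hq j).1)).mp h1 i
      (Finset.mem_erase.mpr ⟨hi, Finset.mem_univ i⟩)
  have hqL : q L = 1 := hqm
  have hiL : ∀ i : Fin m, (i : ℕ) + 1 < m → i ≠ L := by
    intro i h hc
    rw [hc] at h
    simp only [hL] at h
    omega
  have hiL' : ∀ i : Fin m, ¬ ((i : ℕ) + 1 < m) → i = L := by
    intro i h
    have := i.2
    apply Fin.ext
    simp only [hL]
    omega
  have huni : IsStationaryInnovImit m a q (fun _ => 1 / (m : ℝ)) := by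
    refine ⟨fun i => by positivity, ?_, ?_⟩
    · simp [Finset.sum_const, Finset.card_univ]
      field_simp
    · funext i
      rw [key m hm]
      by_cases h : (i : ℕ) + 1 < m
      · rw [hq0 i (hiL i h), dif_pos h]
        ring
      · rw [dif_neg h, hiL' i h, hqL]
        ring
  refine ⟨huni, ?_⟩
  rintro f ⟨hf0, hfsum, hfst⟩
  have step : ∀ i : Fin m, ∀ h : (i : ℕ) + 1 < m, f ⟨(i : ℕ) + 1, h⟩ = f i := by
    intro i h
    have hst := congrFun hfst i
    rw [key m hm, hq0 i (hiL i h), dif_pos h] at hst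
    have h1a : (1 : ℝ) - a ≠ 0 := by linarith
    have : (1 - a) * f ⟨(i : ℕ) + 1, h⟩ = (1 - a) * f i := by linarith
    exact mul_left_cancel₀ h1a this
  have const : ∀ k : ℕ, ∀ hk : k < m, f ⟨k, hk⟩ = f ⟨0, hm⟩ := by
    intro k
    induction k with
    | zero => intro hk; rfl
    | succ n ih =>
      intro hk
      have hn : n < m := by omega
      have := step ⟨n, hn⟩ hk
      rw [this, ih hn]
  have hsum : ∑ i, f i = (m : ℝ) * f ⟨0, hm⟩ := by
    rw [Finset.sum_congr rfl (fun (i : Fin m) _ => const i.1 i.2)]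
    simp [Finset.sum_const, Finset.card_univ, mul_comm]
  have hf0v : f ⟨0, hm⟩ = 1 / (m : ℝ) := by
    rw [hsum] at hfsum
    field_simp at hfsum ⊢
    linarith
  funext i
  exact (const i.1 i.2).trans hf0v
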